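/- arXiv:2011.05169 — 4 statements merged into one kernel-verified Lean document; each statement's English description precedes it below -/
import Mathlib

section
/- For any connected multigraph G = (V,E), the set Ncond(G) is nonempty if and only if G is not a bipartite graph (i.e., it is not the case that G has no self-loops and its node set can be partitioned into two parts with every edge joining the two parts). -/
open scoped BigOperators

attribute [local instance] Classical.propDecidable

/-- A multigraph on the vertex set `V`: a symmetric binary relation on `V`,
possibly with self-loops. -/
structure Multigraph (V : Type*) where
  Adj : V → V → Prop
  symm : ∀ u v, Adj u v → Adj v u

namespace Multigraph

variable {V : Type*}

/-- The neighborhood `E(U)` of a set `U` of vertices. -/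
def nbhd (G : Multigraph V) (U : Set V) : Set V :=
  {v | ∃ u ∈ U, G.Adj u v}

/-- `V₁`, the set of self-looped vertices. -/
def loopSet (G : Multigraph V) : Set V := {v | G.Adj v v}

/-- `V₂`, the set of non-self-looped vertices. -/
def nonloopSet (G : Multigraph V) : Set V := {v | ¬ G.Adj v v}

/-- The maximal subgraph `Ǧ`, obtained by deleting all self-loops. -/
def check (G : Multigraph V) : Multigraph V where
  Adj u v := G.Adj u v ∧ u ≠ v
  symm u v h := ⟨G.symm u v h.1, h.2.symm⟩

/-- An independent set: a nonempty set of pairwise non-adjacent vertices. -/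
def IsIndep (G : Multigraph V) (I : Set V) : Prop :=
  I.Nonempty ∧ ∀ i ∈ I, ∀ j ∈ I, ¬ G.Adj i j

/-- Connectivity of a multigraph: any two nodes are joined by a path of edges. -/
def Connected (G : Multigraph V) : Prop :=
  ∀ u v : V, Relation.ReflTransGen G.Adj u v

/-- `G` is a bipartite graph: its vertex set splits into two parts such that every
edge joins the two parts (in particular, `G` has no self-loop). -/
def IsBipartiteGraph (G : Multigraph V) : Prop :=
  ∃ A B : Set V, (∀ v, v ∈ A ∨ v ∈ B) ∧ (∀ v, ¬(v ∈ A ∧ v ∈ B)) ∧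
    ∀ u v, G.Adj u v → (u ∈ A ∧ v ∈ B) ∨ (u ∈ B ∧ v ∈ A)

section Meas

variable [Fintype V]

/-- Total mass `μ(S)` of a set of vertices. -/
noncomputable def mass (μ : V → ℝ) (S : Set V) : ℝ := ∑ v, S.indicator μ v

/-- `μ ∈ ℳ(V)`: a probability measure with full support on `V`. -/
def FullSupport (μ : V → ℝ) : Prop := (∀ v, 0 < μ v) ∧ ∑ v, μ v = 1

/-- The stability condition `Ncond(G)`: fully supported probability measures `μ` such
that `μ(I) < μ(E(I))` for every independent set `I` of `G`. -/
def Ncond (G : Multigraph V) (μ : V → ℝ) : Prop :=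
  FullSupport μ ∧ ∀ I : Set V, G.IsIndep I → mass μ I < mass μ (G.nbhd I)

/-- The degree of a vertex: its number of neighbors (including itself if self-looped). -/
noncomputable def deg (G : Multigraph V) (i : V) : ℕ := (G.nbhd {i}).ncard

end Meas
end Multigraph

open Multigraph

section Aux

variable {V : Type*} [Fintype V]

lemma mass_eq_sum (μ : V → ℝ) (S : Set V) :
    mass μ S = ∑ v ∈ S.toFinset, μ v := by
  simp [mass, Set.indicator_apply, ← Set.filter_mem_univ_eq_toFinset, Finset.sum_filter]

lemma mass_mono {μ : V → ℝ} (hμ : ∀ v, 0 < μ v) {S T : Set V} (hST : S ⊆ T) :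
    mass μ S ≤ mass μ T := by
  rw [mass_eq_sum, mass_eq_sum]
  exact Finset.sum_le_sum_of_subset_of_nonneg (Set.toFinset_subset_toFinset.2 hST)
    (fun v _ _ => (hμ v).le)

lemma mass_pos {μ : V → ℝ} (hμ : ∀ v, 0 < μ v) {S : Set V} (hS : S.Nonempty) :
    0 < mass μ S := by
  rw [mass_eq_sum]
  exact Finset.sum_pos (fun v _ => hμ v) (Set.toFinset_nonempty.2 hS)

/-- From a bipartition, a nonempty part has strictly less mass than the other. -/
lemma bip_mass_lt {G : Multigraph V} {μ : V → ℝ} (hμ : ∀ v, 0 < μ v)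
    (hN : ∀ I : Set V, G.IsIndep I → mass μ I < mass μ (G.nbhd I))
    {A B : Set V} (hdisj : ∀ v, ¬(v ∈ A ∧ v ∈ B))
    (hedge : ∀ u v, G.Adj u v → (u ∈ A ∧ v ∈ B) ∨ (u ∈ B ∧ v ∈ A))
    (hA : A.Nonempty) : mass μ A < mass μ B := by
  have hind : G.IsIndep A := by
    refine ⟨hA, fun i hi j hj hadj => ?_⟩
    rcases hedge i j hadj with ⟨h1, h2⟩ | ⟨h1, h2⟩
    · exact hdisj j ⟨hj, h2⟩
    · exact hdisj i ⟨hi, h1⟩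
  have hsub : G.nbhd A ⊆ B := by
    rintro v ⟨u, hu, hadj⟩
    rcases hedge u v hadj with ⟨h1, h2⟩ | ⟨h1, h2⟩
    · exact h2
    · exact absurd ⟨hu, h1⟩ (hdisj u)
  exact lt_of_lt_of_le (hN A hind) (mass_mono hμ hsub)

/-- In a connected non-bipartite multigraph every vertex has a neighbor. -/
lemma exists_neighbor {G : Multigraph V} (hconn : G.Connected)
    (hnb : ¬ G.IsBipartiteGraph) (v : V) : ∃ u, G.Adj v u := by
  by_contra h
  push_neg at h
  have hall : ∀ w, w = v := by
    intro w
    have hpath := hconn v w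
    induction hpath with
    | refl => rfl
    | tail _ hstep ih => exact absurd (ih ▸ hstep) (h _)
  refine hnb ⟨Set.univ, ∅, fun w => Or.inl (Set.mem_univ w), fun w hw => hw.2, ?_⟩
  intro a b hadj
  exact absurd ((hall a) ▸ hadj) (h b)

/-- The key counting inequality. -/
lemma deg_count_lt {G : Multigraph V} (hconn : G.Connected)
    (hnb : ¬ G.IsBipartiteGraph) {I : Set V} (hI : G.IsIndep I) :
    ∑ i ∈ I.toFinset, (Finset.univ.filter (G.Adj i)).card
      < ∑ v ∈ (G.nbhd I).toFinset, (Finset.univ.filter (G.Adj v)).card := by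
  classical
  obtain ⟨hIne, hind⟩ := hI
  set It := I.toFinset with hIt
  set Nt := (G.nbhd I).toFinset with hNt
  -- there is a vertex of `nbhd I` with a neighbor outside `I`
  have hex : ∃ v ∈ G.nbhd I, ∃ u, G.Adj v u ∧ u ∉ I := by
    by_contra hcon
    push_neg at hcon
    apply hnb
    refine ⟨I, G.nbhd I, ?_, ?_, ?_⟩
    · -- cover, by connectivity
      obtain ⟨i0, hi0⟩ := hIne
      intro w
      have hpath := hconn i0 w
      induction hpath with
      | refl => exact Or.inl hi0
      | tail _ hstep ih =>
        rcases ih with h | h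
        · exact Or.inr ⟨_, h, hstep⟩
        · exact Or.inl (hcon _ h _ hstep)
    · rintro w ⟨hwI, u, huI, hadj⟩
      exact hind u huI w hwI hadj
    · intro a b hadj
      by_cases haI : a ∈ I
      · refine Or.inl ⟨haI, a, haI, hadj⟩
      · have haN : a ∈ G.nbhd I := by
          -- every vertex is in I ∪ nbhd I: b is a neighbor of a... need a ∈ nbhd I
          -- a has neighbor b; if b ∈ I then a ∈ nbhd I; else?
          by_cases hbI : b ∈ I
          · exact ⟨b, hbI, G.symm a b hadj⟩
          · -- use cover argument again
            exfalso
            obtain ⟨i0, hi0⟩ := hIne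
            have cover : ∀ w, w ∈ I ∨ w ∈ G.nbhd I := by
              intro w
              have hpath := hconn i0 w
              induction hpath with
              | refl => exact Or.inl hi0
              | tail _ hstep ih =>
                rcases ih with h | h
                · exact Or.inr ⟨_, h, hstep⟩
                · exact Or.inl (hcon _ h _ hstep)
            rcases cover a with h | h
            · exact haI h
            · exact hbI (hcon _ h _ hadj)
        exact Or.inr ⟨haN, hcon _ haN _ hadj⟩
  obtain ⟨v0, hv0, u0, hadj0, hu0⟩ := hex
  -- rewrite LHS as a double sum over It × Nt
  have step1 : ∀ i ∈ It, (Finset.univ.filter (G.Adj i)).card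
      = ∑ u ∈ Nt, (if G.Adj i u then 1 else 0) := by
    intro i hi
    rw [Finset.card_filter]
    refine (Finset.sum_subset (Finset.subset_univ Nt) ?_).symm
    intro u _ hu
    rw [if_neg]
    intro hadj
    exact hu (by rw [hNt, Set.mem_toFinset]; exact ⟨i, Set.mem_toFinset.1 hi, hadj⟩)
  rw [Finset.sum_congr rfl step1, Finset.sum_comm]
  have hsymm : ∀ u, (∑ i ∈ It, if G.Adj i u then 1 else 0)
      = ∑ i ∈ It, if G.Adj u i then (1:ℕ) else 0 := fun u =>
    Finset.sum_congr rfl (fun i _ => if_congr ⟨G.symm i u, G.symm u i⟩ rfl rfl)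
  rw [Finset.sum_congr rfl (fun u _ => hsymm u)]
  -- now bound termwise, with strictness at v0
  apply Finset.sum_lt_sum
  · intro u _
    rw [Finset.card_filter]
    exact Finset.sum_le_sum_of_subset (Finset.subset_univ It)
  · refine ⟨v0, by rw [hNt, Set.mem_toFinset]; exact hv0, ?_⟩
    rw [Finset.card_filter]
    apply Finset.sum_lt_sum_of_subset (Finset.subset_univ It) (Finset.mem_univ u0)
    · rw [hIt, Set.mem_toFinset]; exact hu0
    · rw [if_pos hadj0]; exact Nat.zero_lt_one
    · intro j _ _; exact Nat.zero_le _

end Aux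

/-- For any connected multigraph `G`, `Ncond(G)` is nonempty if and
only if `G` is not a bipartite graph. -/
theorem ncond_nonempty_iff_not_bipartite {V : Type*} [Fintype V] (G : Multigraph V)
    (hconn : G.Connected) :
    (∃ μ : V → ℝ, Ncond G μ) ↔ ¬ G.IsBipartiteGraph := by
  constructor
  · rintro ⟨μ, ⟨⟨hpos, hsum⟩, hN⟩⟩ ⟨A, B, hcover, hdisj, hedge⟩
    have hVne : Nonempty V := by
      by_contra h
      rw [not_nonempty_iff] at h
      rw [Finset.univ_eq_empty, Finset.sum_empty] at hsum
      exact one_ne_zero hsum.symm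
    obtain ⟨v0⟩ := hVne
    have hedge' : ∀ u v, G.Adj u v → (u ∈ B ∧ v ∈ A) ∨ (u ∈ A ∧ v ∈ B) :=
      fun u v h => (hedge u v h).symm
    have hdisj' : ∀ v, ¬(v ∈ B ∧ v ∈ A) := fun v h => hdisj v ⟨h.2, h.1⟩
    rcases hcover v0 with hv | hv
    · have h1 : mass μ A < mass μ B := bip_mass_lt hpos hN hdisj hedge ⟨v0, hv⟩
      by_cases hB : B.Nonempty
      · exact lt_asymm h1 (bip_mass_lt hpos hN hdisj' hedge' hB)
      · rw [Set.not_nonempty_iff_eq_empty] at hB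
        have : mass μ B = 0 := by rw [hB, mass_eq_sum]; simp
        exact absurd (h1.trans_eq this) (not_lt.2 (mass_pos hpos ⟨v0, hv⟩).le)
    · have h1 : mass μ B < mass μ A := bip_mass_lt hpos hN hdisj' hedge' ⟨v0, hv⟩
      by_cases hA : A.Nonempty
      · exact lt_asymm h1 (bip_mass_lt hpos hN hdisj hedge hA)
      · rw [Set.not_nonempty_iff_eq_empty] at hA
        have : mass μ A = 0 := by rw [hA, mass_eq_sum]; simp
        exact absurd (h1.trans_eq this) (not_lt.2 (mass_pos hpos ⟨v0, hv⟩).le)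
  · intro hnb
    classical
    have hVne : Nonempty V := by
      by_contra h
      rw [not_nonempty_iff] at h
      exact hnb ⟨∅, ∅, fun v => h.elim v, fun v => h.elim v, fun u v _ => h.elim u⟩
    set d : V → ℝ := fun v => ((Finset.univ.filter (G.Adj v)).card : ℝ) with hd
    have hd_pos : ∀ v, 0 < d v := by
      intro v
      obtain ⟨u, hu⟩ := exists_neighbor hconn hnb v
      have : u ∈ Finset.univ.filter (G.Adj v) := Finset.mem_filter.2 ⟨Finset.mem_univ u, hu⟩
      simp only [hd]
      exact_mod_cast Finset.card_pos.2 ⟨u, this⟩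
    set D : ℝ := ∑ v, d v with hD
    have hD_pos : 0 < D := Finset.sum_pos (fun v _ => hd_pos v) Finset.univ_nonempty
    refine ⟨fun v => d v / D, ⟨⟨fun v => div_pos (hd_pos v) hD_pos, ?_⟩, ?_⟩⟩
    · rw [← Finset.sum_div, ← hD, div_self hD_pos.ne']
    · intro I hI
      have key := deg_count_lt hconn hnb hI
      rw [mass_eq_sum, mass_eq_sum, ← Finset.sum_div, ← Finset.sum_div]
      rw [div_lt_div_iff_of_pos_right hD_pos]
      simp only [hd]
      exact_mod_cast key
end

section
/- Let G=(V,E) be a connected multigraph that is not a bipartite graph. Define deg(i)=|E(i)| (the number of neighbors of i, including i itself if i has a self-loop) and |E|=Σ_{i∈V} deg(i) (equal to the number of ordered pairs in E, each non-loop edge counted twice and each loop once). Then the probability measure μ_deg given by μ_deg(i)=deg(i)/|E| belongs to Ncond(G). -/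
open scoped BigOperators

attribute [local instance] Classical.propDecidable

open Multigraph
/-- For any connected multigraph `G` that is not a bipartite graph,
the probability measure `μ_deg(i) = deg(i)/|E|`, where `|E| = Σ_i deg(i)`, belongs to
`Ncond(G)`. -/
theorem mudeg_mem_ncond {V : Type*} [Fintype V] (G : Multigraph V)
    (hconn : G.Connected) (hnb : ¬ G.IsBipartiteGraph) :
    Ncond G (fun i => (G.deg i : ℝ) / ∑ j : V, (G.deg j : ℝ)) := by
  classical
  -- V is nonempty
  have hVne : Nonempty V := by
    by_contra h
    exact hnb ⟨∅, ∅, fun v => (h ⟨v⟩).elim, fun v => (h ⟨v⟩).elim,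
      fun u v _ => (h ⟨u⟩).elim⟩
  -- every vertex has a neighbor
  have hadj : ∀ v : V, ∃ w, G.Adj v w := by
    intro v
    by_contra h
    push_neg at h
    have hall : ∀ u : V, Relation.ReflTransGen G.Adj v u → u = v := by
      intro u hu
      induction hu with
      | refl => rfl
      | tail _ hstep ih => exact absurd (ih ▸ hstep) (h _)
    refine hnb ⟨Set.univ, ∅, fun u => Or.inl trivial,
      fun u hu => hu.2, fun u w huw => ?_⟩
    rw [hall u (hconn v u), hall w (hconn v w)] at huw
    exact absurd huw (h v)
  -- degree as a filter card
  have hdegF : ∀ i, G.deg i = (Finset.univ.filter (fun v => G.Adj i v)).card := by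
    intro i
    rw [Multigraph.deg, Set.ncard_eq_toFinset_card']
    congr 1
    ext v
    rw [Set.mem_toFinset]
    simp [Multigraph.nbhd]
  -- positivity of degrees
  have hdegpos : ∀ i, 0 < G.deg i := by
    intro i
    obtain ⟨w, hw⟩ := hadj i
    rw [hdegF]
    exact Finset.card_pos.2 ⟨w, Finset.mem_filter.2 ⟨Finset.mem_univ _, hw⟩⟩
  set S : ℝ := ∑ j : V, (G.deg j : ℝ) with hSdef
  have hS : 0 < S := by
    apply Finset.sum_pos
    · intro i _
      exact_mod_cast hdegpos i
    · exact Finset.univ_nonempty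
  -- mass formula
  have hmass : ∀ (μ : V → ℝ) (A : Set V), mass μ A = ∑ v ∈ A.toFinset, μ v := by
    intro μ A
    rw [Multigraph.mass]
    rw [Finset.sum_indicator_eq_sum_filter]
    congr 1
    ext v
    simp
  constructor
  · constructor
    · intro v
      exact div_pos (by exact_mod_cast hdegpos v) hS
    · rw [← Finset.sum_div, div_self hS.ne']
  · intro I hI
    -- key: some vertex of nbhd I has a neighbor outside I
    have hkey : ∃ v ∈ G.nbhd I, ∃ w, G.Adj v w ∧ w ∉ I := by
      by_contra h
      push_neg at h
      apply hnb
      have hcover : ∀ u : V, u ∈ I ∨ u ∈ G.nbhd I := by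
        intro u
        obtain ⟨i0, hi0⟩ := hI.1
        have hpath := hconn i0 u
        induction hpath with
        | refl => exact Or.inl hi0
        | tail _ hstep ih =>
          rcases ih with hb | hb
          · exact Or.inr ⟨_, hb, hstep⟩
          · exact Or.inl (h _ hb _ hstep)
      refine ⟨I, G.nbhd I, hcover, ?_, ?_⟩
      · rintro v ⟨hv1, u, hu, hadjuv⟩
        exact hI.2 u hu v hv1 hadjuv
      · intro u v huv
        rcases hcover u with hu | hu
        · exact Or.inl ⟨hu, ⟨u, hu, huv⟩⟩
        · exact Or.inr ⟨hu, h _ hu _ huv⟩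
    obtain ⟨v0, hv0, w0, hvw0, hw0⟩ := hkey
    set It := I.toFinset with hItdef
    set Nt := (G.nbhd I).toFinset with hNtdef
    set F : V → Finset V := fun i => Finset.univ.filter (fun v => G.Adj i v) with hFdef
    -- double counting in ℕ
    have hcount : ∑ i ∈ It, G.deg i = ∑ v : V, (It.filter (fun i => G.Adj i v)).card := by
      calc ∑ i ∈ It, G.deg i = ∑ i ∈ It, ∑ v : V, (if G.Adj i v then 1 else 0) := by
            refine Finset.sum_congr rfl fun i _ => ?_
            rw [hdegF, Finset.card_filter]
        _ = ∑ v : V, ∑ i ∈ It, (if G.Adj i v then 1 else 0) := Finset.sum_comm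
        _ = ∑ v : V, (It.filter (fun i => G.Adj i v)).card := by
            refine Finset.sum_congr rfl fun v _ => ?_
            rw [Finset.card_filter]
    have hrestrict : ∑ v : V, (It.filter (fun i => G.Adj i v)).card
        = ∑ v ∈ Nt, (It.filter (fun i => G.Adj i v)).card := by
      symm
      apply Finset.sum_subset (Finset.subset_univ _)
      intro v _ hv
      rw [Finset.card_eq_zero, Finset.filter_eq_empty_iff]
      intro i hi hadjiv
      exact hv (Set.mem_toFinset.2 ⟨i, Set.mem_toFinset.1 hi, hadjiv⟩)
    have hle : ∀ v ∈ Nt, (It.filter (fun i => G.Adj i v)).card ≤ G.deg v := by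
      intro v _
      rw [hdegF]
      apply Finset.card_le_card
      intro i hi
      rw [Finset.mem_filter] at hi ⊢
      exact ⟨Finset.mem_univ _, G.symm _ _ hi.2⟩
    have hv0Nt : v0 ∈ Nt := Set.mem_toFinset.2 hv0
    have hstrict : (It.filter (fun i => G.Adj i v0)).card < G.deg v0 := by
      rw [hdegF]
      apply Finset.card_lt_card
      rw [Finset.ssubset_iff_of_subset]
      · exact ⟨w0, Finset.mem_filter.2 ⟨Finset.mem_univ _, hvw0⟩,
          fun hc => hw0 (Set.mem_toFinset.1 (Finset.mem_filter.1 hc).1)⟩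
      · intro i hi
        rw [Finset.mem_filter] at hi ⊢
        exact ⟨Finset.mem_univ _, G.symm _ _ hi.2⟩
    have hnat : ∑ i ∈ It, G.deg i < ∑ v ∈ Nt, G.deg v := by
      rw [hcount, hrestrict]
      exact Finset.sum_lt_sum hle ⟨v0, hv0Nt, hstrict⟩
    -- conclude over ℝ
    have hreal : (∑ i ∈ It, (G.deg i : ℝ)) < ∑ v ∈ Nt, (G.deg v : ℝ) := by
      exact_mod_cast hnat
    rw [hmass, hmass, ← hItdef, ← hNtdef]
    rw [← Finset.sum_div, ← Finset.sum_div]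
    exact div_lt_div_of_pos_right hreal hS
end

section
/- Let G=(V,E) be a connected multigraph with at least two nodes in which every node has a self-loop (V=V₁). Then for every admissible matching policy Φ and every μ∈ℳ(V), the Markov chain (W_n) on 𝕎 is positive recurrent. In particular, the state space 𝕎 is finite: every word in 𝕎 has length at most the cardinality of the largest independent set of the maximal subgraph Ǧ. -/
open scoped BigOperators

attribute [local instance] Classical.propDecidable

namespace Multigraph

variable {V : Type*}

section Chain

variable [DecidableEq V]

/-- The state space `𝕎` of admissible queue details. -/
def WSpace (G : Multigraph V) : Set (List V) :=
  {w | (∀ i j : V, i ≠ j → G.Adj i j → w.count i = 0 ∨ w.count j = 0) ∧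
    ∀ i : V, G.Adj i i → w.count i ≤ 1}

/-- An admissible matching policy: a (possibly random) transition rule which, in state
`w` upon the arrival of an item of class `v`, appends `v` when no compatible item is in
line, and otherwise deletes one stored item of a class compatible with `v`. -/
structure Policy (G : Multigraph V) where
  next : List V → V → List V → ℝ
  nonneg : ∀ w v w', 0 ≤ next w v w'
  total : ∀ w ∈ WSpace G, ∀ v : V, (∑' w' : List V, next w v w') = 1
  noMatch : ∀ w ∈ WSpace G, ∀ v : V, (∀ a ∈ w, ¬ G.Adj a v) → next w v (w ++ [v]) = 1
  matchRule : ∀ w ∈ WSpace G, ∀ v : V, (∃ a ∈ w, G.Adj a v) → ∀ w' : List V,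
    next w v w' ≠ 0 → ∃ k : Fin w.length, G.Adj (w.get k) v ∧ w' = w.eraseIdx k

/-- The transition kernel of the buffer-content Markov chain of the model `(G,Φ,μ)`. -/
noncomputable def kernel [Fintype V] (G : Multigraph V) (pol : Policy G) (μ : V → ℝ)
    (w w' : List V) : ℝ :=
  ∑ v : V, μ v * pol.next w v w'

/-- Irreducibility (on the state space `𝕎`) of a transition kernel. -/
def Irreducible (G : Multigraph V) (P : List V → List V → ℝ) : Prop :=
  ∀ w ∈ WSpace G, ∀ w' ∈ WSpace G, Relation.ReflTransGen (fun a b => 0 < P a b) w w'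

/-- A stationary probability distribution, supported on `𝕎`, for a transition kernel. -/
def IsStationary (G : Multigraph V) (P : List V → List V → ℝ) (π : List V → ℝ) :
    Prop :=
  (∀ w, 0 ≤ π w) ∧ (∀ w ∉ WSpace G, π w = 0) ∧ (∑' w : List V, π w) = 1 ∧
    ∀ w' : List V, (∑' w : List V, π w * P w w') = π w'

/-- Positive recurrence of the chain: irreducibility together with the existence of a
stationary probability distribution. -/
def PositiveRecurrent (G : Multigraph V) (P : List V → List V → ℝ) : Prop :=
  Irreducible G P ∧ ∃ π : List V → ℝ, IsStationary G P π

end Chain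
end Multigraph


namespace MGAux
open Multigraph

variable {V : Type*} [DecidableEq V] {G : Multigraph V}

lemma mem_WSpace_iff (hloops : ∀ v : V, G.Adj v v) {w : List V} :
    w ∈ WSpace G ↔ w.Nodup ∧ ∀ a ∈ w, ∀ b ∈ w, a ≠ b → ¬ G.Adj a b := by
  constructor
  · rintro ⟨h1, h2⟩
    refine ⟨List.nodup_iff_count_le_one.mpr fun a => h2 a (hloops a), ?_⟩
    intro a ha b hb hab hadj
    rcases h1 a b hab hadj with h0 | h0
    · exact (List.count_eq_zero.mp h0) ha
    · exact (List.count_eq_zero.mp h0) hb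
  · rintro ⟨hn, hp⟩
    refine ⟨?_, fun i _ => List.nodup_iff_count_le_one.mp hn i⟩
    intro i j hij hadj
    by_cases hi : i ∈ w
    · exact Or.inr (List.count_eq_zero.mpr fun hj => hp i hi j hj hij hadj)
    · exact Or.inl (List.count_eq_zero.mpr hi)

lemma mem_WSpace_of_sublist {u w : List V} (h : u.Sublist w) (hw : w ∈ WSpace G) :
    u ∈ WSpace G := by
  obtain ⟨h1, h2⟩ := hw
  refine ⟨fun i j hij hadj => ?_, fun i hi => le_trans (h.count_le i) (h2 i hi)⟩
  rcases h1 i j hij hadj with h0 | h0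
  · exact Or.inl (Nat.le_zero.mp (h0 ▸ h.count_le i))
  · exact Or.inr (Nat.le_zero.mp (h0 ▸ h.count_le j))

lemma not_adj_of_append (hloops : ∀ v : V, G.Adj v v) {u : List V} {v a : V}
    (hw : u ++ [v] ∈ WSpace G) (ha : a ∈ u) : ¬ G.Adj a v := by
  rw [mem_WSpace_iff hloops] at hw
  obtain ⟨hn, hp⟩ := hw
  intro hadj
  by_cases hav : a = v
  · subst hav
    have : a ∉ u := by
      have := List.disjoint_of_nodup_append hn
      exact fun hh => this hh (List.mem_singleton_self a)
    exact this ha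
  · exact hp a (by simp [ha]) v (by simp) hav hadj

lemma append_mem_WSpace (hloops : ∀ v : V, G.Adj v v) {w : List V} {v : V}
    (hw : w ∈ WSpace G) (hna : ∀ a ∈ w, ¬ G.Adj a v) : w ++ [v] ∈ WSpace G := by
  rw [mem_WSpace_iff hloops] at hw ⊢
  obtain ⟨hn, hp⟩ := hw
  have hvw : v ∉ w := fun h => hna v h (hloops v)
  refine ⟨by simp [List.nodup_append, hn, hvw]; exact fun a ha hav => hvw (hav ▸ ha), ?_⟩
  intro a ha b hb hab hadj
  simp only [List.mem_append, List.mem_singleton] at ha hb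
  rcases ha with ha | ha <;> rcases hb with hb | hb
  · exact hp a ha b hb hab hadj
  · subst hb; exact hna a ha hadj
  · subst ha; exact hna b hb (G.symm _ _ hadj)
  · subst ha; subst hb; exact hab rfl

lemma summable_next (pol : Policy G) {w : List V} (hw : w ∈ WSpace G) (v : V) :
    Summable (pol.next w v) := by
  by_contra h
  have h1 := pol.total w hw v
  rw [tsum_eq_zero_of_not_summable h] at h1
  exact one_ne_zero h1.symm

lemma next_eq_zero (hloops : ∀ v : V, G.Adj v v) (pol : Policy G) {w : List V}
    (hw : w ∈ WSpace G) (v : V) {w' : List V} (hw' : w' ∉ WSpace G) :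
    pol.next w v w' = 0 := by
  by_cases hm : ∃ a ∈ w, G.Adj a v
  · by_contra h
    obtain ⟨k, _, hk⟩ := pol.matchRule w hw v hm w' h
    exact hw' (hk ▸ mem_WSpace_of_sublist (List.eraseIdx_sublist w k) hw)
  · push_neg at hm
    have hmem : w ++ [v] ∈ WSpace G := append_mem_WSpace hloops hw hm
    have h1 := pol.noMatch w hw v hm
    have hne : w ++ [v] ≠ w' := fun h => hw' (h ▸ hmem)
    have hsum : pol.next w v (w ++ [v]) + pol.next w v w' ≤ 1 := by
      have hle := Summable.sum_le_tsum ({w ++ [v], w'} : Finset (List V))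
        (fun b _ => pol.nonneg w v b) (summable_next pol hw v)
      rw [pol.total w hw v] at hle
      rwa [Finset.sum_pair hne] at hle
    rw [h1] at hsum
    have := pol.nonneg w v w'
    linarith

section Kernel
variable [Fintype V]

lemma kernel_nonneg (pol : Policy G) {μ : V → ℝ} (hμ : ∀ v, 0 ≤ μ v) (w w' : List V) :
    0 ≤ kernel G pol μ w w' :=
  Finset.sum_nonneg fun v _ => mul_nonneg (hμ v) (pol.nonneg w v w')

lemma kernel_pos (pol : Policy G) {μ : V → ℝ} (hμ : ∀ v, 0 < μ v) {w w' : List V}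
    {v : V} (h : 0 < pol.next w v w') : 0 < kernel G pol μ w w' :=
  Finset.sum_pos' (fun i _ => mul_nonneg (hμ i).le (pol.nonneg w i w'))
    ⟨v, Finset.mem_univ v, mul_pos (hμ v) h⟩

lemma kernel_eq_zero (hloops : ∀ v : V, G.Adj v v) (pol : Policy G) {μ : V → ℝ}
    {w : List V} (hw : w ∈ WSpace G) {w' : List V} (hw' : w' ∉ WSpace G) :
    kernel G pol μ w w' = 0 :=
  Finset.sum_eq_zero fun v _ => by rw [next_eq_zero hloops pol hw v hw', mul_zero]

lemma kernel_row_sum (hloops : ∀ v : V, G.Adj v v) (pol : Policy G) {μ : V → ℝ}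
    (hμ : FullSupport μ) {w : List V} (hw : w ∈ WSpace G) {s : Finset (List V)}
    (hs : ∀ w', w' ∈ s ↔ w' ∈ WSpace G) :
    ∑ w' ∈ s, kernel G pol μ w w' = 1 := by
  have h0 : ∀ w' ∉ s, kernel G pol μ w w' = 0 := fun w' h =>
    kernel_eq_zero hloops pol hw (fun hh => h ((hs w').mpr hh))
  rw [← tsum_eq_sum (L := SummationFilter.unconditional _) h0]
  calc ∑' w', kernel G pol μ w w' = ∑' w', ∑ v : V, μ v * pol.next w v w' := rfl
    _ = ∑ v : V, ∑' w', μ v * pol.next w v w' :=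
        Summable.tsum_finsetSum fun v _ => (summable_next pol hw v).mul_left (μ v)
    _ = ∑ v : V, μ v := by
        refine Finset.sum_congr rfl fun v _ => ?_
        rw [tsum_mul_left, pol.total w hw v, mul_one]
    _ = 1 := hμ.2

end Kernel

lemma exists_stationary_vec {n : Type*} [Fintype n] [DecidableEq n] [Nonempty n]
    (M : Matrix n n ℝ) (h0 : ∀ a b, 0 ≤ M a b) (h1 : ∀ a, ∑ b, M a b = 1) :
    ∃ y : n → ℝ, (∀ a, 0 ≤ y a) ∧ (∑ a, y a) = 1 ∧ ∀ b, ∑ a, y a * M a b = y b := by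
  have hdet : (M - 1).det = 0 := by
    rw [← Matrix.exists_mulVec_eq_zero_iff]
    refine ⟨fun _ => 1, fun h => one_ne_zero (congrFun h (Classical.arbitrary n)), ?_⟩
    funext a
    rw [Matrix.sub_mulVec, Pi.sub_apply, Matrix.one_mulVec]
    simp [Matrix.mulVec, dotProduct, h1]
  obtain ⟨x, hx0, hx⟩ := Matrix.exists_vecMul_eq_zero_iff.mpr hdet
  have hfix : ∀ b, ∑ a, x a * M a b = x b := by
    intro b
    have h := congrFun hx b
    simp only [Matrix.vecMul, dotProduct, Matrix.sub_apply, Matrix.one_apply,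
      mul_sub, Finset.sum_sub_distrib, mul_ite, mul_one, mul_zero,
      Finset.sum_ite_eq', Finset.mem_univ, if_true, Pi.zero_apply] at h
    linarith
  have hyle : ∀ b, |x b| ≤ ∑ a, |x a| * M a b := by
    intro b
    calc |x b| = |∑ a, x a * M a b| := by rw [hfix b]
      _ ≤ ∑ a, |x a * M a b| := Finset.abs_sum_le_sum_abs _ _
      _ = ∑ a, |x a| * M a b := Finset.sum_congr rfl fun a _ => by
          rw [abs_mul, abs_of_nonneg (h0 a b)]
  have hsums : ∑ b, ∑ a, |x a| * M a b = ∑ b, |x b| := by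
    rw [Finset.sum_comm]
    refine Finset.sum_congr rfl fun a _ => ?_
    rw [← Finset.mul_sum, h1 a, mul_one]
  have hyfix : ∀ b, ∑ a, |x a| * M a b = |x b| := by
    have hzero : ∑ b, (∑ a, |x a| * M a b - |x b|) = 0 := by
      rw [Finset.sum_sub_distrib, hsums, sub_self]
    intro b
    have := (Finset.sum_eq_zero_iff_of_nonneg
      (fun c _ => sub_nonneg.mpr (hyle c))).mp hzero b (Finset.mem_univ b)
    linarith
  have hc : 0 < ∑ a, |x a| := by
    obtain ⟨a, ha⟩ := Function.ne_iff.mp hx0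
    exact Finset.sum_pos' (fun i _ => abs_nonneg _)
      ⟨a, Finset.mem_univ a, abs_pos.mpr ha⟩
  refine ⟨fun a => |x a| / (∑ a, |x a|), fun a => div_nonneg (abs_nonneg _) hc.le, ?_, ?_⟩
  · rw [← Finset.sum_div, div_self hc.ne']
  · intro b
    calc ∑ a, |x a| / (∑ a, |x a|) * M a b
        = (∑ a, |x a| * M a b) / (∑ a, |x a|) := by
          rw [Finset.sum_div]
          exact Finset.sum_congr rfl fun a _ => by ring
      _ = |x b| / (∑ a, |x a|) := by rw [hyfix b]

end MGAux

open Multigraph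
/-- If every node of a connected multigraph `G` (with at least two
nodes) carries a self-loop, then for every admissible matching policy and every fully
supported `μ` the buffer-content Markov chain is positive recurrent; moreover the state
space `𝕎` is finite, every word of `𝕎` having length at most the cardinality of the
largest independent set of the maximal subgraph `Ǧ`. -/
theorem all_loops_positive_recurrent {V : Type*} [Fintype V] [DecidableEq V]
    (G : Multigraph V) (hconn : G.Connected) (hcard : 2 ≤ Fintype.card V)
    (hloops : ∀ v : V, G.Adj v v) :
    (∀ (pol : Policy G) (μ : V → ℝ), FullSupport μ →
      PositiveRecurrent G (kernel G pol μ)) ∧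
    (WSpace G).Finite ∧
    ∀ w ∈ WSpace G, ∃ I : Set V, (check G).IsIndep I ∧ w.length ≤ I.ncard := by
  classical
  have hWiff : ∀ w : List V, w ∈ WSpace G ↔
      w.Nodup ∧ ∀ a ∈ w, ∀ b ∈ w, a ≠ b → ¬ G.Adj a b :=
    fun w => MGAux.mem_WSpace_iff hloops
  have hfin : (WSpace G).Finite := by
    apply Set.Finite.subset (List.finite_length_le V (Fintype.card V))
    intro w hw
    exact ((hWiff w).mp hw).1.length_le_card
  have part3 : ∀ w ∈ WSpace G, ∃ I : Set V, (check G).IsIndep I ∧ w.length ≤ I.ncard := by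
    intro w hw
    obtain ⟨hn, hp⟩ := (hWiff w).mp hw
    by_cases hnil : w = []
    · obtain ⟨v⟩ : Nonempty V := Fintype.card_pos_iff.mp (by omega)
      refine ⟨{v}, ⟨⟨v, rfl⟩, ?_⟩, by simp [hnil]⟩
      rintro i hi j hj ⟨_, hne⟩
      rw [Set.mem_singleton_iff] at hi hj
      exact hne (hi.trans hj.symm)
    · refine ⟨{a | a ∈ w}, ⟨?_, ?_⟩, ?_⟩
      · obtain ⟨a, ha⟩ := List.exists_mem_of_ne_nil w hnil
        exact ⟨a, ha⟩
      · rintro i hi j hj ⟨hadj, hne⟩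
        exact hp i hi j hj hne hadj
      · have hset : {a | a ∈ w} = ↑w.toFinset := by ext a; simp
        rw [hset, Set.ncard_coe_finset, List.toFinset_card_of_nodup hn]
  refine ⟨?_, hfin, part3⟩
  intro pol μ hμ
  constructor
  · -- irreducibility
    have step_reach_nil : ∀ n (w : List V), w.length ≤ n → w ∈ WSpace G →
        Relation.ReflTransGen (fun a b => 0 < kernel G pol μ a b) w [] := by
      intro n
      induction n with
      | zero =>
        intro w hl _
        have : w = [] := List.length_eq_zero_iff.mp (Nat.le_zero.mp hl)
        subst this; exact Relation.ReflTransGen.refl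
      | succ n ih =>
        intro w hl hw
        match w with
        | [] => exact Relation.ReflTransGen.refl
        | a :: t =>
          have hmem : ∃ b ∈ (a :: t), G.Adj b a := ⟨a, List.mem_cons_self, hloops a⟩
          have hex : ∃ w', 0 < pol.next (a :: t) a w' := by
            by_contra h
            push_neg at h
            have hz : ∀ w', pol.next (a :: t) a w' = 0 :=
              fun w' => le_antisymm (h w') (pol.nonneg _ _ _)
            have htot := pol.total (a :: t) hw a
            simp only [hz, tsum_zero] at htot
            exact one_ne_zero htot.symm
          obtain ⟨w', hpos⟩ := hex
          obtain ⟨k, _, hk⟩ := pol.matchRule (a :: t) hw a hmem w' hpos.ne'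
          have hw'W : w' ∈ WSpace G :=
            hk ▸ MGAux.mem_WSpace_of_sublist (List.eraseIdx_sublist _ _) hw
          have hlen' : w'.length ≤ n := by
            have hkl : (k : ℕ) < (a :: t).length := k.isLt
            have hle := List.length_eraseIdx_of_lt hkl
            rw [hk, hle]
            simp only [List.length_cons] at hl ⊢
            omega
          exact Relation.ReflTransGen.head (MGAux.kernel_pos pol hμ.1 hpos)
            (ih w' hlen' hw'W)
    have nil_reach : ∀ w : List V, w ∈ WSpace G →
        Relation.ReflTransGen (fun a b => 0 < kernel G pol μ a b) [] w := by
      intro w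
      induction w using List.reverseRecOn with
      | nil => intro _; exact Relation.ReflTransGen.refl
      | append_singleton u v ih =>
        intro hw
        have hu : u ∈ WSpace G :=
          MGAux.mem_WSpace_of_sublist (List.sublist_append_left u [v]) hw
        have hna : ∀ a ∈ u, ¬ G.Adj a v :=
          fun a ha => MGAux.not_adj_of_append hloops hw ha
        have h1 := pol.noMatch u hu v hna
        exact (ih hu).tail (MGAux.kernel_pos pol hμ.1
          (show 0 < pol.next u v (u ++ [v]) by rw [h1]; exact one_pos))
    exact fun w hw w' hw' =>
      (step_reach_nil w.length w le_rfl hw).trans (nil_reach w' hw')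
  · -- stationary distribution
    haveI instW : Fintype ↥(WSpace G) := hfin.fintype
    haveI : Nonempty ↥(WSpace G) :=
      ⟨⟨[], ⟨fun i j _ _ => Or.inl rfl, fun i _ => by simp⟩⟩⟩
    have hms : ∀ x : List V, x ∈ hfin.toFinset ↔ x ∈ WSpace G :=
      fun x => hfin.mem_toFinset
    set M : Matrix ↥(WSpace G) ↥(WSpace G) ℝ :=
      fun a b => kernel G pol μ a b with hMdef
    have hM0 : ∀ a b, 0 ≤ M a b :=
      fun a b => MGAux.kernel_nonneg pol (fun v => (hμ.1 v).le) _ _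
    have hM1 : ∀ a, ∑ b, M a b = 1 := by
      intro a
      have h := Finset.sum_subtype (F := instW) hfin.toFinset hms
        (fun w' => kernel G pol μ (↑a) w')
      rw [hMdef]
      rw [← h]
      exact MGAux.kernel_row_sum hloops pol hμ a.2 hms
    obtain ⟨y, hy0, hy1, hyfix⟩ := MGAux.exists_stationary_vec M hM0 hM1
    refine ⟨fun w => if h : w ∈ WSpace G then y ⟨w, h⟩ else 0, ?_, ?_, ?_, ?_⟩
    · intro w
      by_cases h : w ∈ WSpace G <;> simp [h, hy0]
    · intro w hw; simp [hw]
    · have h0 : ∀ w ∉ hfin.toFinset,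
          (if h : w ∈ WSpace G then y ⟨w, h⟩ else 0) = 0 := fun w h =>
        dif_neg (fun hh => h ((hms w).mpr hh))
      rw [tsum_eq_sum (L := SummationFilter.unconditional _) h0]
      rw [Finset.sum_subtype (F := instW) hfin.toFinset hms
          (fun w => if h : w ∈ WSpace G then y ⟨w, h⟩ else 0)]
      rw [← hy1]
      refine Finset.sum_congr rfl fun b _ => ?_
      rw [dif_pos b.2]
    · intro w'
      have h0 : ∀ w ∉ hfin.toFinset,
          (if h : w ∈ WSpace G then y ⟨w, h⟩ else 0) * kernel G pol μ w w' = 0 :=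
        fun w h => by rw [dif_neg (fun hh => h ((hms w).mpr hh)), zero_mul]
      rw [tsum_eq_sum (L := SummationFilter.unconditional _) h0]
      beta_reduce
      by_cases hw' : w' ∈ WSpace G
      · rw [Finset.sum_subtype (F := instW) hfin.toFinset hms
          (fun w => (if h : w ∈ WSpace G then y ⟨w, h⟩ else 0) * kernel G pol μ w w'),
          dif_pos hw']
        calc (∑ b : ↥(WSpace G),
              (if h : (b : List V) ∈ WSpace G then y ⟨b, h⟩ else 0) * kernel G pol μ b w')
            = ∑ b : ↥(WSpace G), y b * M b ⟨w', hw'⟩ := by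
              refine Finset.sum_congr rfl fun b _ => ?_
              rw [dif_pos b.2]
          _ = y ⟨w', hw'⟩ := hyfix ⟨w', hw'⟩
      · rw [dif_neg hw']
        refine Finset.sum_eq_zero fun w hwmem => ?_
        rw [MGAux.kernel_eq_zero hloops pol ((hms w).mp hwmem) hw', mul_zero]
end

section
/- For any connected multigraph G=(V,E) and any admissible matching policy Φ, stab(G,Φ) ⊆ Ncond(G): if the Markov chain (W_n) of the model (G,Φ,μ) is positive recurrent, then μ(I) < μ(E(I)) for every independent set I of G. -/
open scoped BigOperators

attribute [local instance] Classical.propDecidable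

open Multigraph

section StabAux

variable {V : Type*} [Fintype V] [DecidableEq V]

private noncomputable def chiF (G : Multigraph V) (I : Set V) (v : V) : ℤ :=
  (if v ∈ I then 1 else 0) - (if v ∈ G.nbhd I then 1 else 0)

private noncomputable def fF (G : Multigraph V) (I : Set V) (w : List V) : ℤ :=
  (w.map (chiF G I)).sum

private lemma chiF_bnd (G : Multigraph V) (I : Set V) (v : V) :
    -1 ≤ chiF G I v ∧ chiF G I v ≤ 1 := by
  unfold chiF; split_ifs <;> omega

private lemma chiF_of_mem {G : Multigraph V} {I : Set V} (hI : G.IsIndep I) {v : V}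
    (hv : v ∈ I) : chiF G I v = 1 := by
  have hnb : v ∉ G.nbhd I := by
    rintro ⟨u, hu, huv⟩
    exact hI.2 u hu v hv huv
  simp [chiF, hv, hnb]

private lemma chiF_of_adj {G : Multigraph V} {I : Set V} (hI : G.IsIndep I) {v u : V}
    (hv : v ∈ I) (hadj : G.Adj u v) : chiF G I u = -1 := by
  have hnb : u ∈ G.nbhd I := ⟨v, hv, G.symm u v hadj⟩
  have hni : u ∉ I := fun hu => hI.2 u hu v hv hadj
  simp [chiF, hnb, hni]

private lemma chiF_nonpos_of_not_nbhd {G : Multigraph V} {I : Set V} {v u : V}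
    (hv : v ∉ G.nbhd I) (hadj : G.Adj u v) : chiF G I u = 0 ∨ chiF G I u = -1 := by
  have hni : u ∉ I := fun hu => hv ⟨u, hu, hadj⟩
  unfold chiF; simp only [hni, if_neg, if_false]
  split_ifs <;> omega

private lemma fF_append (G : Multigraph V) (I : Set V) (w : List V) (v : V) :
    fF G I (w ++ [v]) = fF G I w + chiF G I v := by
  simp [fF]

private lemma fF_eraseIdx (G : Multigraph V) (I : Set V) (w : List V) (k : ℕ)
    (hk : k < w.length) :
    fF G I (w.eraseIdx k) = fF G I w - chiF G I w[k] := by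
  set χ := chiF G I
  set m := w.map χ with hmdef
  have hm : k < m.length := by simpa [hmdef]
  have h1 : (w.eraseIdx k).map χ = m.take k ++ m.drop (k+1) := by
    rw [List.eraseIdx_eq_take_drop_succ, List.map_append, List.map_take, List.map_drop]
  have h2 : m = m.take k ++ m[k] :: m.drop (k+1) := by
    rw [← List.drop_eq_getElem_cons hm, List.take_append_drop]
  have h3 : m.sum = (m.take k).sum + (m[k] + (m.drop (k+1)).sum) := by
    conv_lhs => rw [h2]
    rw [List.sum_append, List.sum_cons]
  have h4 : m[k] = χ w[k] := by simp [hmdef]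
  show ((w.eraseIdx k).map χ).sum = (w.map χ).sum - χ w[k]
  rw [h1, List.sum_append, ← hmdef, h3, h4]
  ring

variable {G : Multigraph V} {pol : Policy G}

private lemma next_summable {w : List V} (hw : w ∈ WSpace G) (v : V) :
    Summable (pol.next w v) := by
  by_contra h
  have h0 := tsum_eq_zero_of_not_summable h
  have h1 := pol.total w hw v
  rw [h0] at h1
  norm_num at h1

private lemma support_cases {w : List V} (hw : w ∈ WSpace G) (v : V) {w' : List V}
    (h : pol.next w v w' ≠ 0) :
    ((∀ a ∈ w, ¬ G.Adj a v) ∧ w' = w ++ [v]) ∨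
      ∃ k : Fin w.length, G.Adj (w.get k) v ∧ w' = w.eraseIdx k := by
  by_cases hm : ∃ a ∈ w, G.Adj a v
  · exact Or.inr (pol.matchRule w hw v hm w' h)
  · push_neg at hm
    left
    refine ⟨hm, ?_⟩
    by_contra hne
    have h1 := pol.noMatch w hw v hm
    have hpos : 0 < pol.next w v w' := lt_of_le_of_ne (pol.nonneg w v w') (Ne.symm h)
    have hsum : pol.next w v (w ++ [v]) + pol.next w v w' ≤ 1 := by
      have hle := Summable.sum_le_tsum ({w ++ [v], w'} : Finset (List V))
        (fun i _ => pol.nonneg w v i) (next_summable hw v)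
      rw [pol.total w hw v] at hle
      rwa [Finset.sum_pair (fun hc => hne hc.symm)] at hle
    rw [h1] at hsum
    linarith

private lemma step_mem {I : Set V} (hI : G.IsIndep I) {w : List V} (hw : w ∈ WSpace G)
    {v : V} (hv : v ∈ I) {w' : List V} (h : pol.next w v w' ≠ 0) :
    fF G I w' = fF G I w + 1 := by
  rcases support_cases hw v h with ⟨-, rfl⟩ | ⟨k, hadj, rfl⟩
  · rw [fF_append, chiF_of_mem hI hv]
  · rw [fF_eraseIdx G I w k k.isLt]
    rw [List.get_eq_getElem] at hadj
    rw [chiF_of_adj hI hv hadj]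
    ring

private lemma step_out {I : Set V} (hI : G.IsIndep I) {w : List V} (hw : w ∈ WSpace G)
    {v : V} (hv : v ∉ I) (hv2 : v ∉ G.nbhd I) {w' : List V} (h : pol.next w v w' ≠ 0) :
    fF G I w' = fF G I w ∨ fF G I w' = fF G I w + 1 := by
  rcases support_cases hw v h with ⟨-, rfl⟩ | ⟨k, hadj, rfl⟩
  · rw [fF_append]
    have : chiF G I v = 0 := by
      have hnb : v ∉ G.nbhd I := hv2
      simp [chiF, hv, hnb]
    omega
  · rw [fF_eraseIdx G I w k k.isLt]
    rw [List.get_eq_getElem] at hadj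
    rcases chiF_nonpos_of_not_nbhd hv2 hadj with h0 | h0 <;> rw [h0] <;> omega

private lemma step_bnd (I : Set V) {w : List V} (hw : w ∈ WSpace G)
    (v : V) {w' : List V} (h : pol.next w v w' ≠ 0) :
    fF G I w - 1 ≤ fF G I w' ∧ fF G I w' ≤ fF G I w + 1 := by
  rcases support_cases hw v h with ⟨-, rfl⟩ | ⟨k, hadj, rfl⟩
  · rw [fF_append]
    have := chiF_bnd G I v
    omega
  · rw [fF_eraseIdx G I w k k.isLt]
    have := chiF_bnd G I (w[(k : ℕ)])
    omega

end StabAux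
section StabAux2

set_option linter.unusedSectionVars false
set_option linter.unusedVariables false

variable {V : Type*} [Fintype V] [DecidableEq V] {G : Multigraph V} {pol : Policy G}

private noncomputable def UF (G : Multigraph V) (pol : Policy G) (I : Set V)
    (w : List V) (v : V) : ℝ :=
  ∑' w', pol.next w v w' * (if fF G I w' = fF G I w + 1 then (1:ℝ) else 0)

private noncomputable def DF (G : Multigraph V) (pol : Policy G) (I : Set V)
    (w : List V) (v : V) : ℝ :=
  ∑' w', pol.next w v w' * (if fF G I w' = fF G I w - 1 then (1:ℝ) else 0)

private lemma nextMul_summable {w : List V} (hw : w ∈ WSpace G) (v : V)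
    {c : List V → ℝ} (h0 : ∀ x, 0 ≤ c x) (h1 : ∀ x, c x ≤ 1) :
    Summable (fun w' => pol.next w v w' * c w') := by
  refine Summable.of_nonneg_of_le (f := pol.next w v) (fun w' => mul_nonneg (pol.nonneg w v w') (h0 w'))
    (fun w' => ?_) (next_summable hw v)
  calc pol.next w v w' * c w' ≤ pol.next w v w' * 1 :=
        mul_le_mul_of_nonneg_left (h1 w') (pol.nonneg w v w')
    _ = pol.next w v w' := mul_one _

private lemma ind_nonneg (p : Prop) [Decidable p] : (0:ℝ) ≤ if p then 1 else 0 := by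
  split_ifs <;> norm_num

private lemma ind_le_one (p : Prop) [Decidable p] : (if p then (1:ℝ) else 0) ≤ 1 := by
  split_ifs <;> norm_num

private lemma UF_nonneg (I : Set V) (w : List V) (v : V) : 0 ≤ UF G pol I w v :=
  tsum_nonneg fun w' => mul_nonneg (pol.nonneg w v w') (ind_nonneg _)

private lemma DF_nonneg (I : Set V) (w : List V) (v : V) : 0 ≤ DF G pol I w v :=
  tsum_nonneg fun w' => mul_nonneg (pol.nonneg w v w') (ind_nonneg _)

private lemma UF_le_one (I : Set V) {w : List V} (hw : w ∈ WSpace G) (v : V) :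
    UF G pol I w v ≤ 1 := by
  have h := Summable.tsum_le_tsum (f := fun w' => pol.next w v w' *
      (if fF G I w' = fF G I w + 1 then (1:ℝ) else 0)) (g := pol.next w v)
    (fun w' => by
      calc pol.next w v w' * _ ≤ pol.next w v w' * 1 :=
            mul_le_mul_of_nonneg_left (ind_le_one _) (pol.nonneg w v w')
        _ = pol.next w v w' := mul_one _)
    (nextMul_summable hw v (fun _ => ind_nonneg _) (fun _ => ind_le_one _))
    (next_summable hw v)
  rwa [pol.total w hw v] at h

private lemma DF_le_one (I : Set V) {w : List V} (hw : w ∈ WSpace G) (v : V) :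
    DF G pol I w v ≤ 1 := by
  have h := Summable.tsum_le_tsum (f := fun w' => pol.next w v w' *
      (if fF G I w' = fF G I w - 1 then (1:ℝ) else 0)) (g := pol.next w v)
    (fun w' => by
      calc pol.next w v w' * _ ≤ pol.next w v w' * 1 :=
            mul_le_mul_of_nonneg_left (ind_le_one _) (pol.nonneg w v w')
        _ = pol.next w v w' := mul_one _)
    (nextMul_summable hw v (fun _ => ind_nonneg _) (fun _ => ind_le_one _))
    (next_summable hw v)
  rwa [pol.total w hw v] at h

private lemma UF_eq_one {I : Set V} (hI : G.IsIndep I) {w : List V} (hw : w ∈ WSpace G)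
    {v : V} (hv : v ∈ I) : UF G pol I w v = 1 := by
  have : ∀ w', pol.next w v w' * (if fF G I w' = fF G I w + 1 then (1:ℝ) else 0)
      = pol.next w v w' := by
    intro w'
    by_cases h : pol.next w v w' = 0
    · simp [h]
    · rw [if_pos (step_mem hI hw hv h), mul_one]
  rw [show UF G pol I w v = _ from tsum_congr this, pol.total w hw v]

private lemma DF_eq_zero_of_mem {I : Set V} (hI : G.IsIndep I) {w : List V}
    (hw : w ∈ WSpace G) {v : V} (hv : v ∈ I) : DF G pol I w v = 0 := by
  have : ∀ w', pol.next w v w' * (if fF G I w' = fF G I w - 1 then (1:ℝ) else 0) = 0 := by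
    intro w'
    by_cases h : pol.next w v w' = 0
    · simp [h]
    · have := step_mem hI hw hv h
      rw [if_neg (by omega), mul_zero]
  rw [show DF G pol I w v = _ from tsum_congr this, tsum_zero]

private lemma DF_eq_zero_of_out {I : Set V} (hI : G.IsIndep I) {w : List V}
    (hw : w ∈ WSpace G) {v : V} (hv : v ∉ I) (hv2 : v ∉ G.nbhd I) :
    DF G pol I w v = 0 := by
  have : ∀ w', pol.next w v w' * (if fF G I w' = fF G I w - 1 then (1:ℝ) else 0) = 0 := by
    intro w'
    by_cases h : pol.next w v w' = 0
    · simp [h]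
    · have := step_out hI hw hv hv2 h
      rw [if_neg (by omega), mul_zero]
  rw [show DF G pol I w v = _ from tsum_congr this, tsum_zero]

private lemma TF_eval (I : Set V) {w : List V} (hw : w ∈ WSpace G) (v : V) (k : ℤ) :
    (∑' w', pol.next w v w' * (if k + 1 ≤ fF G I w' then (1:ℝ) else 0))
      = if k + 2 ≤ fF G I w then 1
        else if fF G I w = k + 1 then 1 - DF G pol I w v
        else if fF G I w = k then UF G pol I w v
        else 0 := by
  by_cases h1 : k + 2 ≤ fF G I w
  · rw [if_pos h1]
    have : ∀ w', pol.next w v w' * (if k + 1 ≤ fF G I w' then (1:ℝ) else 0)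
        = pol.next w v w' := by
      intro w'
      by_cases h : pol.next w v w' = 0
      · simp [h]
      · have := step_bnd I hw v h
        rw [if_pos (by omega), mul_one]
    rw [tsum_congr this, pol.total w hw v]
  · rw [if_neg h1]
    by_cases h2 : fF G I w = k + 1
    · rw [if_pos h2]
      have hptw : ∀ w', pol.next w v w' * (if k + 1 ≤ fF G I w' then (1:ℝ) else 0)
          = pol.next w v w' - pol.next w v w' *
            (if fF G I w' = fF G I w - 1 then (1:ℝ) else 0) := by
        intro w'
        by_cases h : pol.next w v w' = 0
        · simp [h]
        · have hb := step_bnd I hw v h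
          by_cases hc : fF G I w' = fF G I w - 1
          · rw [if_pos hc, if_neg (by omega), mul_one, mul_zero]
            ring
          · rw [if_neg hc, if_pos (by omega), mul_zero, mul_one]
            ring
      rw [tsum_congr hptw, Summable.tsum_sub (next_summable hw v)
        (nextMul_summable hw v (fun _ => ind_nonneg _) (fun _ => ind_le_one _)),
        pol.total w hw v]
      rfl
    · rw [if_neg h2]
      by_cases h3 : fF G I w = k
      · rw [if_pos h3]
        have : ∀ w', pol.next w v w' * (if k + 1 ≤ fF G I w' then (1:ℝ) else 0)
            = pol.next w v w' * (if fF G I w' = fF G I w + 1 then (1:ℝ) else 0) := by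
          intro w'
          by_cases h : pol.next w v w' = 0
          · simp [h]
          · have hb := step_bnd I hw v h
            by_cases hc : fF G I w' = fF G I w + 1
            · rw [if_pos hc, if_pos (by omega)]
            · rw [if_neg hc, if_neg (by omega)]
        rw [tsum_congr this]
        rfl
      · rw [if_neg h3]
        have : ∀ w', pol.next w v w' * (if k + 1 ≤ fF G I w' then (1:ℝ) else 0) = 0 := by
          intro w'
          by_cases h : pol.next w v w' = 0
          · simp [h]
          · have hb := step_bnd I hw v h
            rw [if_neg (by omega), mul_zero]
        rw [tsum_congr this, tsum_zero]

end StabAux2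
section StabAux3

set_option linter.unusedSectionVars false
set_option linter.unusedVariables false

variable {V : Type*} [Fintype V] [DecidableEq V] {G : Multigraph V} {pol : Policy G}
  {μ : V → ℝ}

private lemma kernel_nonneg (hμ : FullSupport μ) (w w' : List V) :
    0 ≤ kernel G pol μ w w' :=
  Finset.sum_nonneg fun v _ => mul_nonneg (hμ.1 v).le (pol.nonneg w v w')

private lemma kernel_summable {w : List V} (hw : w ∈ WSpace G) :
    Summable (kernel G pol μ w) :=
  summable_sum fun v _ => (next_summable hw v).mul_left (μ v)

private lemma kernel_tsum (hμ : FullSupport μ) {w : List V} (hw : w ∈ WSpace G) :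
    (∑' w', kernel G pol μ w w') = 1 := by
  calc (∑' w', ∑ v, μ v * pol.next w v w')
      = ∑ v, ∑' w', μ v * pol.next w v w' :=
        Summable.tsum_finsetSum fun v _ => (next_summable hw v).mul_left (μ v)
    _ = ∑ v, μ v * (∑' w', pol.next w v w') :=
        Finset.sum_congr rfl fun v _ => tsum_mul_left
    _ = ∑ v, μ v := Finset.sum_congr rfl fun v _ => by rw [pol.total w hw v, mul_one]
    _ = 1 := hμ.2

private lemma kernelMul {w : List V} (hw : w ∈ WSpace G) (c : List V → ℝ)
    (h0 : ∀ x, 0 ≤ c x) (h1 : ∀ x, c x ≤ 1) :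
    (∑' w', kernel G pol μ w w' * c w')
      = ∑ v, μ v * (∑' w', pol.next w v w' * c w') := by
  calc (∑' w', kernel G pol μ w w' * c w')
      = ∑' w', ∑ v, μ v * (pol.next w v w' * c w') := by
        refine tsum_congr fun w' => ?_
        show (∑ v, μ v * pol.next w v w') * c w' = _
        rw [Finset.sum_mul]
        exact Finset.sum_congr rfl fun v _ => by ring
    _ = ∑ v, ∑' w', μ v * (pol.next w v w' * c w') :=
        Summable.tsum_finsetSum fun v _ => ((nextMul_summable hw v h0 h1).mul_left (μ v))
    _ = ∑ v, μ v * (∑' w', pol.next w v w' * c w') :=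
        Finset.sum_congr rfl fun v _ => tsum_mul_left

private lemma kernelMul_summable (hμ : FullSupport μ) {w : List V} (hw : w ∈ WSpace G)
    (c : List V → ℝ) (h0 : ∀ x, 0 ≤ c x) (h1 : ∀ x, c x ≤ 1) :
    Summable (fun w' => kernel G pol μ w w' * c w') := by
  refine Summable.of_nonneg_of_le (f := kernel G pol μ w)
    (fun w' => mul_nonneg (kernel_nonneg hμ w w') (h0 w')) (fun w' => ?_)
    (kernel_summable hw)
  calc kernel G pol μ w w' * c w' ≤ kernel G pol μ w w' * 1 :=
        mul_le_mul_of_nonneg_left (h1 w') (kernel_nonneg hμ w w')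
    _ = kernel G pol μ w w' := mul_one _

private noncomputable def UPF (G : Multigraph V) (pol : Policy G) (μ : V → ℝ) (I : Set V)
    (w : List V) : ℝ := ∑ v, μ v * UF G pol I w v

private noncomputable def DNF (G : Multigraph V) (pol : Policy G) (μ : V → ℝ) (I : Set V)
    (w : List V) : ℝ := ∑ v, μ v * DF G pol I w v

private lemma TK_eval (hμ : FullSupport μ) (I : Set V) {w : List V} (hw : w ∈ WSpace G)
    (k : ℤ) :
    (∑' w', kernel G pol μ w w' * (if k + 1 ≤ fF G I w' then (1:ℝ) else 0))
      = if k + 2 ≤ fF G I w then 1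
        else if fF G I w = k + 1 then 1 - DNF G pol μ I w
        else if fF G I w = k then UPF G pol μ I w
        else 0 := by
  rw [kernelMul hw _ (fun _ => ind_nonneg _) (fun _ => ind_le_one _)]
  rw [Finset.sum_congr rfl fun v _ => by rw [TF_eval I hw v k]]
  by_cases h1 : k + 2 ≤ fF G I w
  · simp only [if_pos h1, mul_one]
    exact hμ.2
  · rw [if_neg h1]
    by_cases h2 : fF G I w = k + 1
    · simp only [if_neg h1, if_pos h2]
      rw [Finset.sum_congr rfl fun v _ => mul_sub (μ v) 1 (DF G pol I w v),
        Finset.sum_sub_distrib]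
      simp only [mul_one]
      rw [hμ.2]
      rfl
    · rw [if_neg h2]
      by_cases h3 : fF G I w = k
      · simp only [if_neg h1, if_neg h2, if_pos h3]
        rfl
      · simp only [if_neg h1, if_neg h2, if_neg h3, mul_zero, Finset.sum_const_zero]

private lemma UPF_nonneg (hμ : FullSupport μ) (I : Set V) (w : List V) :
    0 ≤ UPF G pol μ I w :=
  Finset.sum_nonneg fun v _ => mul_nonneg (hμ.1 v).le (UF_nonneg I w v)

private lemma DNF_nonneg (hμ : FullSupport μ) (I : Set V) (w : List V) :
    0 ≤ DNF G pol μ I w :=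
  Finset.sum_nonneg fun v _ => mul_nonneg (hμ.1 v).le (DF_nonneg I w v)

private lemma UPF_le_one (hμ : FullSupport μ) (I : Set V) {w : List V}
    (hw : w ∈ WSpace G) : UPF G pol μ I w ≤ 1 := by
  calc UPF G pol μ I w ≤ ∑ v, μ v := Finset.sum_le_sum fun v _ => by
        calc μ v * UF G pol I w v ≤ μ v * 1 :=
              mul_le_mul_of_nonneg_left (UF_le_one I hw v) (hμ.1 v).le
          _ = μ v := mul_one _
    _ = 1 := hμ.2

private lemma DNF_le_one (hμ : FullSupport μ) (I : Set V) {w : List V}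
    (hw : w ∈ WSpace G) : DNF G pol μ I w ≤ 1 := by
  calc DNF G pol μ I w ≤ ∑ v, μ v := Finset.sum_le_sum fun v _ => by
        calc μ v * DF G pol I w v ≤ μ v * 1 :=
              mul_le_mul_of_nonneg_left (DF_le_one I hw v) (hμ.1 v).le
          _ = μ v := mul_one _
    _ = 1 := hμ.2

private lemma UPF_ge (hμ : FullSupport μ) {I : Set V} (hI : G.IsIndep I) {w : List V}
    (hw : w ∈ WSpace G) :
    (∑ v, if v ∈ I then μ v else 0) ≤ UPF G pol μ I w := by
  refine Finset.sum_le_sum fun v _ => ?_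
  by_cases hv : v ∈ I
  · rw [if_pos hv, UF_eq_one hI hw hv, mul_one]
  · rw [if_neg hv]
    exact mul_nonneg (hμ.1 v).le (UF_nonneg I w v)

private lemma DNF_le (hμ : FullSupport μ) {I : Set V} (hI : G.IsIndep I) {w : List V}
    (hw : w ∈ WSpace G) :
    DNF G pol μ I w ≤ ∑ v, if v ∈ G.nbhd I then μ v else 0 := by
  refine Finset.sum_le_sum fun v _ => ?_
  by_cases hv : v ∈ G.nbhd I
  · rw [if_pos hv]
    calc μ v * DF G pol I w v ≤ μ v * 1 :=
          mul_le_mul_of_nonneg_left (DF_le_one I hw v) (hμ.1 v).le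
      _ = μ v := mul_one _
  · rw [if_neg hv]
    by_cases hvI : v ∈ I
    · rw [DF_eq_zero_of_mem hI hw hvI, mul_zero]
    · rw [DF_eq_zero_of_out hI hw hvI hv, mul_zero]

end StabAux3
section StabAux4

set_option linter.unusedSectionVars false
set_option linter.unusedVariables false

variable {V : Type*} [Fintype V] [DecidableEq V] {G : Multigraph V} {pol : Policy G}
  {μ : V → ℝ} {π : List V → ℝ}

private lemma pi_summable (hπ : IsStationary G (kernel G pol μ) π) : Summable π := by
  by_contra h
  have h0 := tsum_eq_zero_of_not_summable h
  rw [hπ.2.2.1] at h0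
  norm_num at h0

private lemma piMul_summable (hπ : IsStationary G (kernel G pol μ) π) (c : List V → ℝ)
    (hc : ∀ w ∈ WSpace G, 0 ≤ c w ∧ c w ≤ 1) :
    Summable (fun w => π w * c w) := by
  refine Summable.of_nonneg_of_le (f := π) (fun w => ?_) (fun w => ?_) (pi_summable hπ)
  · by_cases hw : w ∈ WSpace G
    · exact mul_nonneg (hπ.1 w) (hc w hw).1
    · rw [hπ.2.1 w hw, zero_mul]
  · by_cases hw : w ∈ WSpace G
    · calc π w * c w ≤ π w * 1 := mul_le_mul_of_nonneg_left (hc w hw).2 (hπ.1 w)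
        _ = π w := mul_one _
    · rw [hπ.2.1 w hw, zero_mul]

private lemma statFubini (hμ : FullSupport μ) (hπ : IsStationary G (kernel G pol μ) π)
    (c : List V → ℝ) (h0 : ∀ x, 0 ≤ c x) (h1 : ∀ x, c x ≤ 1) :
    (∑' w', π w' * c w') = ∑' w, π w * (∑' w', kernel G pol μ w w' * c w') := by
  have hnn : ∀ w, 0 ≤ π w := hπ.1
  have hsupp : ∀ w ∉ WSpace G, π w = 0 := hπ.2.1
  set f : List V → List V → ℝ := fun w w' => π w * (kernel G pol μ w w' * c w') with hf
  have hfib : ∀ w, Summable (fun w' => f w w') := by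
    intro w
    by_cases hw : w ∈ WSpace G
    · exact (kernelMul_summable hμ hw c h0 h1).mul_left (π w)
    · have he : (fun w' => f w w') = fun _ => 0 := by
        funext w'; simp [hf, hsupp w hw]
      rw [he]; exact summable_zero
  have hnn2 : ∀ w w', 0 ≤ f w w' := fun w w' =>
    mul_nonneg (hnn w) (mul_nonneg (kernel_nonneg hμ w w') (h0 w'))
  have htsle : ∀ w, (∑' w', f w w') ≤ π w := by
    intro w
    by_cases hw : w ∈ WSpace G
    · calc (∑' w', f w w') = π w * (∑' w', kernel G pol μ w w' * c w') := tsum_mul_left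
        _ ≤ π w * (∑' w', kernel G pol μ w w') := by
            refine mul_le_mul_of_nonneg_left ?_ (hnn w)
            refine Summable.tsum_le_tsum (fun w' => ?_) (kernelMul_summable hμ hw c h0 h1)
              (kernel_summable hw)
            calc kernel G pol μ w w' * c w' ≤ kernel G pol μ w w' * 1 :=
                  mul_le_mul_of_nonneg_left (h1 w') (kernel_nonneg hμ w w')
              _ = kernel G pol μ w w' := mul_one _
        _ = π w := by rw [kernel_tsum hμ hw, mul_one]
    · have he : (fun w' => f w w') = fun _ => 0 := by
        funext w'; simp [hf, hsupp w hw]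
      rw [he, tsum_zero]
      exact hnn w
  have hsum2 : Summable (fun w => ∑' w', f w w') :=
    Summable.of_nonneg_of_le (f := π) (fun w => tsum_nonneg (hnn2 w)) htsle (pi_summable hπ)
  have hunc : Summable (Function.uncurry f) := by
    refine (summable_prod_of_nonneg ?_).mpr ⟨hfib, hsum2⟩
    intro p
    exact hnn2 p.1 p.2
  calc (∑' w', π w' * c w')
      = ∑' w', (∑' w, π w * kernel G pol μ w w') * c w' := by
        refine tsum_congr fun w' => ?_
        rw [hπ.2.2.2 w']
    _ = ∑' w', ∑' w, f w w' := by
        refine tsum_congr fun w' => ?_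
        rw [← tsum_mul_right]
        exact tsum_congr fun w => by rw [hf]; ring
    _ = ∑' w, ∑' w', f w w' := Summable.tsum_comm hunc
    _ = ∑' w, π w * (∑' w', kernel G pol μ w w' * c w') :=
        tsum_congr fun w => tsum_mul_left

end StabAux4
section StabAux5

set_option linter.unusedSectionVars false
set_option linter.unusedVariables false

variable {V : Type*} [Fintype V] [DecidableEq V] {G : Multigraph V} {pol : Policy G}
  {μ : V → ℝ} {π : List V → ℝ}

private lemma balance (hμ : FullSupport μ) (hπ : IsStationary G (kernel G pol μ) π)
    {I : Set V} (hI : G.IsIndep I) (k : ℤ) :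
    (∑' w, π w * ((if fF G I w = k then (1:ℝ) else 0) * UPF G pol μ I w))
      = ∑' w, π w * ((if fF G I w = k + 1 then (1:ℝ) else 0) * DNF G pol μ I w) := by
  have hsupp := hπ.2.1
  have hS1 : Summable (fun w => π w * (if k + 2 ≤ fF G I w then (1:ℝ) else 0)) :=
    piMul_summable hπ _ fun w hw => ⟨ind_nonneg _, ind_le_one _⟩
  have hS2 : Summable (fun w => π w *
      ((if fF G I w = k + 1 then (1:ℝ) else 0) * (1 - DNF G pol μ I w))) := by
    refine piMul_summable hπ _ fun w hw => ⟨?_, ?_⟩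
    · exact mul_nonneg (ind_nonneg _) (sub_nonneg.mpr (DNF_le_one hμ I hw))
    · exact mul_le_one₀ (ind_le_one _) (sub_nonneg.mpr (DNF_le_one hμ I hw))
        (by have := DNF_nonneg (G := G) (pol := pol) hμ I w; linarith)
  have hS3 : Summable (fun w => π w *
      ((if fF G I w = k then (1:ℝ) else 0) * UPF G pol μ I w)) := by
    refine piMul_summable hπ _ fun w hw => ⟨?_, ?_⟩
    · exact mul_nonneg (ind_nonneg _) (UPF_nonneg hμ I w)
    · exact mul_le_one₀ (ind_le_one _) (UPF_nonneg hμ I w) (UPF_le_one hμ I hw)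
  have hS4 : Summable (fun w => π w * (if fF G I w = k + 1 then (1:ℝ) else 0)) :=
    piMul_summable hπ _ fun w hw => ⟨ind_nonneg _, ind_le_one _⟩
  have hS5 : Summable (fun w => π w *
      ((if fF G I w = k + 1 then (1:ℝ) else 0) * DNF G pol μ I w)) := by
    refine piMul_summable hπ _ fun w hw => ⟨?_, ?_⟩
    · exact mul_nonneg (ind_nonneg _) (DNF_nonneg hμ I w)
    · exact mul_le_one₀ (ind_le_one _) (DNF_nonneg hμ I w) (DNF_le_one hμ I hw)
  have main := statFubini hμ hπ (fun w' => if k + 1 ≤ fF G I w' then (1:ℝ) else 0)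
    (fun _ => ind_nonneg _) (fun _ => ind_le_one _)
  have hL : (∑' w', π w' * (if k + 1 ≤ fF G I w' then (1:ℝ) else 0))
      = (∑' w, π w * (if k + 2 ≤ fF G I w then (1:ℝ) else 0))
        + ∑' w, π w * (if fF G I w = k + 1 then (1:ℝ) else 0) := by
    rw [← Summable.tsum_add hS1 hS4]
    refine tsum_congr fun w => ?_
    by_cases h1 : k + 2 ≤ fF G I w
    · rw [if_pos (show k + 1 ≤ fF G I w by omega), if_pos h1,
        if_neg (show ¬ fF G I w = k + 1 by omega)]
      ring
    · rw [if_neg h1]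
      by_cases h2 : fF G I w = k + 1
      · rw [if_pos (show k + 1 ≤ fF G I w by omega), if_pos h2]
        ring
      · rw [if_neg (show ¬ k + 1 ≤ fF G I w by omega), if_neg h2]
        ring
  have hR : (∑' w, π w * (∑' w', kernel G pol μ w w' *
        (if k + 1 ≤ fF G I w' then (1:ℝ) else 0)))
      = (∑' w, π w * (if k + 2 ≤ fF G I w then (1:ℝ) else 0))
        + ((∑' w, π w * ((if fF G I w = k + 1 then (1:ℝ) else 0) * (1 - DNF G pol μ I w)))
          + ∑' w, π w * ((if fF G I w = k then (1:ℝ) else 0) * UPF G pol μ I w)) := by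
    rw [← Summable.tsum_add hS2 hS3, ← Summable.tsum_add hS1 (hS2.add hS3)]
    refine tsum_congr fun w => ?_
    by_cases hw : w ∈ WSpace G
    · rw [TK_eval hμ I hw k]
      by_cases h1 : k + 2 ≤ fF G I w
      · rw [if_pos h1, if_pos h1, if_neg (show ¬ fF G I w = k + 1 by omega),
          if_neg (show ¬ fF G I w = k by omega)]
        ring
      · rw [if_neg h1, if_neg h1]
        by_cases h2 : fF G I w = k + 1
        · rw [if_pos h2, if_pos h2, if_neg (show ¬ fF G I w = k by omega)]
          ring
        · rw [if_neg h2, if_neg h2]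
          by_cases h3 : fF G I w = k
          · rw [if_pos h3, if_pos h3]
            ring
          · rw [if_neg h3, if_neg h3]
            ring
    · rw [hsupp w hw]
      ring
  have hexp : (∑' w, π w * ((if fF G I w = k + 1 then (1:ℝ) else 0) * (1 - DNF G pol μ I w)))
      = (∑' w, π w * (if fF G I w = k + 1 then (1:ℝ) else 0))
        - ∑' w, π w * ((if fF G I w = k + 1 then (1:ℝ) else 0) * DNF G pol μ I w) := by
    rw [← Summable.tsum_sub hS4 hS5]
    exact tsum_congr fun w => by ring
  rw [hL, hR, hexp] at main
  linarith

end StabAux5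
open Multigraph
/-- For any connected multigraph `G` and any admissible matching
policy `Φ`, `stab(G,Φ) ⊆ Ncond(G)`: if the buffer-content Markov chain of the model
`(G,Φ,μ)` is positive recurrent, then `μ ∈ Ncond(G)`. -/
theorem stab_subset_ncond {V : Type*} [Fintype V] [DecidableEq V] (G : Multigraph V)
    (hconn : G.Connected) (pol : Policy G) (μ : V → ℝ) (hμ : FullSupport μ)
    (hpr : PositiveRecurrent G (kernel G pol μ)) :
    Ncond G μ := by
  obtain ⟨-, π, hπ⟩ := hpr
  refine ⟨hμ, fun I hI => ?_⟩
  by_contra hcon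
  push_neg at hcon
  have hmassI : mass μ I = ∑ v, if v ∈ I then μ v else 0 :=
    Finset.sum_congr rfl fun v _ => Set.indicator_apply I μ v
  have hmassN : mass μ (G.nbhd I) = ∑ v, if v ∈ G.nbhd I then μ v else 0 :=
    Finset.sum_congr rfl fun v _ => Set.indicator_apply _ μ v
  have hba : (∑ v, if v ∈ G.nbhd I then μ v else 0) ≤ ∑ v, if v ∈ I then μ v else 0 := by
    rw [hmassI, hmassN] at hcon
    exact hcon
  have ha_pos : (0:ℝ) < ∑ v, if v ∈ I then μ v else 0 := by
    obtain ⟨i, hi⟩ := hI.1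
    have h1 : μ i ≤ ∑ v, if v ∈ I then μ v else 0 := by
      have h2 := Finset.single_le_sum (f := fun v => if v ∈ I then μ v else 0)
        (fun v _ => by split_ifs with h; exacts [(hμ.1 v).le, le_rfl])
        (Finset.mem_univ i)
      rwa [if_pos hi] at h2
    exact lt_of_lt_of_le (hμ.1 i) h1
  have hνS : ∀ k : ℤ, Summable (fun w => π w * (if fF G I w = k then (1:ℝ) else 0)) :=
    fun k => piMul_summable hπ _ fun w hw => ⟨ind_nonneg _, ind_le_one _⟩
  set ν : ℤ → ℝ := fun k => ∑' w, π w * (if fF G I w = k then (1:ℝ) else 0) with hν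
  have hν0 : ∀ k, 0 ≤ ν k := fun k =>
    tsum_nonneg fun w => mul_nonneg (hπ.1 w) (ind_nonneg _)
  have hmono : ∀ k : ℤ, ν k ≤ ν (k + 1) := by
    intro k
    have hSR : Summable (fun w => π w *
        ((if fF G I w = k then (1:ℝ) else 0) * UPF G pol μ I w)) := by
      refine piMul_summable hπ _ fun w hw => ⟨?_, ?_⟩
      · exact mul_nonneg (ind_nonneg _) (UPF_nonneg hμ I w)
      · exact mul_le_one₀ (ind_le_one _) (UPF_nonneg hμ I w) (UPF_le_one hμ I hw)
    have hSA : Summable (fun w => π w *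
        ((if fF G I w = k + 1 then (1:ℝ) else 0) * DNF G pol μ I w)) := by
      refine piMul_summable hπ _ fun w hw => ⟨?_, ?_⟩
      · exact mul_nonneg (ind_nonneg _) (DNF_nonneg hμ I w)
      · exact mul_le_one₀ (ind_le_one _) (DNF_nonneg hμ I w) (DNF_le_one hμ I hw)
    have hBge : (∑ v, if v ∈ I then μ v else 0) * ν k
        ≤ ∑' w, π w * ((if fF G I w = k then (1:ℝ) else 0) * UPF G pol μ I w) := by
      have hpt : ∀ w, (∑ v, if v ∈ I then μ v else 0) *
            (π w * (if fF G I w = k then (1:ℝ) else 0))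
          ≤ π w * ((if fF G I w = k then (1:ℝ) else 0) * UPF G pol μ I w) := by
        intro w
        by_cases hw : w ∈ WSpace G
        · by_cases h : fF G I w = k
          · rw [if_pos h]
            have h2 := UPF_ge (pol := pol) hμ hI hw
            calc (∑ v, if v ∈ I then μ v else 0) * (π w * 1)
                = π w * (∑ v, if v ∈ I then μ v else 0) := by ring
              _ ≤ π w * UPF G pol μ I w := mul_le_mul_of_nonneg_left h2 (hπ.1 w)
              _ = π w * (1 * UPF G pol μ I w) := by ring
          · rw [if_neg h]
            simp
        · rw [hπ.2.1 w hw]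
          simp
      calc (∑ v, if v ∈ I then μ v else 0) * ν k
          = ∑' w, (∑ v, if v ∈ I then μ v else 0) *
              (π w * (if fF G I w = k then (1:ℝ) else 0)) := tsum_mul_left.symm
        _ ≤ _ := Summable.tsum_le_tsum hpt ((hνS k).mul_left _) hSR
    have hAle : (∑' w, π w * ((if fF G I w = k + 1 then (1:ℝ) else 0) * DNF G pol μ I w))
        ≤ (∑ v, if v ∈ G.nbhd I then μ v else 0) * ν (k + 1) := by
      have hpt : ∀ w, π w * ((if fF G I w = k + 1 then (1:ℝ) else 0) * DNF G pol μ I w)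
          ≤ (∑ v, if v ∈ G.nbhd I then μ v else 0) *
              (π w * (if fF G I w = k + 1 then (1:ℝ) else 0)) := by
        intro w
        by_cases hw : w ∈ WSpace G
        · by_cases h : fF G I w = k + 1
          · rw [if_pos h]
            have hd := DNF_le (pol := pol) hμ hI hw
            calc π w * (1 * DNF G pol μ I w) = π w * DNF G pol μ I w := by ring
              _ ≤ π w * (∑ v, if v ∈ G.nbhd I then μ v else 0) :=
                  mul_le_mul_of_nonneg_left hd (hπ.1 w)
              _ = (∑ v, if v ∈ G.nbhd I then μ v else 0) * (π w * 1) := by ring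
          · rw [if_neg h]
            simp
        · rw [hπ.2.1 w hw]
          simp
      calc (∑' w, π w * ((if fF G I w = k + 1 then (1:ℝ) else 0) * DNF G pol μ I w))
          ≤ ∑' w, (∑ v, if v ∈ G.nbhd I then μ v else 0) *
              (π w * (if fF G I w = k + 1 then (1:ℝ) else 0)) :=
            Summable.tsum_le_tsum hpt hSA ((hνS (k + 1)).mul_left _)
        _ = (∑ v, if v ∈ G.nbhd I then μ v else 0) * ν (k + 1) := tsum_mul_left
    have hbal := balance hμ hπ hI k
    have h1 : (∑ v, if v ∈ I then μ v else 0) * ν k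
        ≤ (∑ v, if v ∈ I then μ v else 0) * ν (k + 1) := by
      have h2 : (∑ v, if v ∈ G.nbhd I then μ v else 0) * ν (k + 1)
          ≤ (∑ v, if v ∈ I then μ v else 0) * ν (k + 1) :=
        mul_le_mul_of_nonneg_right hba (hν0 (k + 1))
      rw [hbal] at hBge
      linarith
    exact le_of_mul_le_mul_left h1 ha_pos
  have hex : ∃ w0, 0 < π w0 := by
    by_contra h
    push_neg at h
    have hz : ∀ w, π w = 0 := fun w => le_antisymm (h w) (hπ.1 w)
    have h1 := hπ.2.2.1
    have h0 : (0:ℝ) = 1 := by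
      calc (0:ℝ) = ∑' _w : List V, (0:ℝ) := tsum_zero.symm
        _ = ∑' w : List V, π w := tsum_congr fun w => (hz w).symm
        _ = 1 := h1
    norm_num at h0
  obtain ⟨w0, hw0⟩ := hex
  have hbase : π w0 ≤ ν (fF G I w0) := by
    have h1 := Summable.le_tsum (hνS (fF G I w0)) w0
      (fun j _ => mul_nonneg (hπ.1 j) (ind_nonneg _))
    rwa [if_pos rfl, mul_one] at h1
  have hmono' : ∀ n : ℕ, π w0 ≤ ν (fF G I w0 + n) := by
    intro n
    induction n with
    | zero => simpa using hbase
    | succ m ih =>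
      have h1 : ν (fF G I w0 + m) ≤ ν (fF G I w0 + m + 1) := hmono _
      have h2 : (fF G I w0 + (m:ℤ) + 1 : ℤ) = fF G I w0 + ((m + 1 : ℕ) : ℤ) := by
        push_cast
        ring
      rw [h2] at h1
      exact le_trans ih h1
  have hNb : ∀ N : ℕ, (N : ℝ) * π w0 ≤ 1 := by
    intro N
    have hsum : (∑ n ∈ Finset.range N, ν (fF G I w0 + n)) ≤ 1 := by
      have heq : (∑ n ∈ Finset.range N, ν (fF G I w0 + n))
          = ∑' w, ∑ n ∈ Finset.range N,
              π w * (if fF G I w = fF G I w0 + n then (1:ℝ) else 0) :=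
        (Summable.tsum_finsetSum fun n _ => hνS _).symm
      rw [heq]
      have hle : ∀ w, (∑ n ∈ Finset.range N,
          π w * (if fF G I w = fF G I w0 + n then (1:ℝ) else 0)) ≤ π w := by
        intro w
        rw [← Finset.mul_sum]
        have hcard : (∑ n ∈ Finset.range N,
            if fF G I w = fF G I w0 + n then (1:ℝ) else 0) ≤ 1 := by
          rw [Finset.sum_boole]
          norm_cast
          refine Finset.card_le_one.mpr ?_
          intro m hm n hn
          simp only [Finset.mem_filter] at hm hn
          omega
        calc π w * _ ≤ π w * 1 := mul_le_mul_of_nonneg_left hcard (hπ.1 w)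
          _ = π w := mul_one _
      have hSsum : Summable (fun w => ∑ n ∈ Finset.range N,
          π w * (if fF G I w = fF G I w0 + n then (1:ℝ) else 0)) :=
        summable_sum fun n _ => hνS _
      calc (∑' w, ∑ n ∈ Finset.range N,
            π w * (if fF G I w = fF G I w0 + n then (1:ℝ) else 0))
          ≤ ∑' w, π w := Summable.tsum_le_tsum hle hSsum (pi_summable hπ)
        _ = 1 := hπ.2.2.1
    have h2 : (N:ℝ) * π w0 ≤ ∑ n ∈ Finset.range N, ν (fF G I w0 + n) := by
      calc (N:ℝ) * π w0 = ∑ _n ∈ Finset.range N, π w0 := by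
            rw [Finset.sum_const, Finset.card_range, nsmul_eq_mul]
        _ ≤ _ := Finset.sum_le_sum fun n _ => hmono' n
    linarith
  obtain ⟨N, hN⟩ := exists_nat_gt (1 / π w0)
  have h3 : (1:ℝ) < N * π w0 := (div_lt_iff₀ hw0).mp hN
  have h4 := hNb N
  linarith
end
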